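/- If P is a Bernoulli product measure with parameter p on {-1,+1}^V for a countable set V, and E, F are increasing events (with respect to the partial order where +1 ≥ -1 coordinatewise), then P(E ∩ F) ≥ P(E)·P(F) (FKG/Harris inequality). -/

import Mathlib

open MeasureTheory Set Function
set_option linter.unusedSectionVars false

namespace BPFaux

variable {V : Type*}

def cylSet (s : Finset V) (f : V → Bool) : Set (V → Bool) := {ω | ∀ v ∈ s, ω v = f v}

lemma measurableSet_cylSet (s : Finset V) (f : V → Bool) : MeasurableSet (cylSet s f) := by
  have h : cylSet s f = ⋂ v ∈ s, {ω : V → Bool | ω v = f v} := by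
    ext ω; simp [cylSet]
  rw [h]
  refine MeasurableSet.biInter s.countable_toSet fun v _ => ?_
  have h2 : {ω : V → Bool | ω v = f v} = (fun ω : V → Bool => ω v) ⁻¹' {f v} := rfl
  rw [h2]
  exact measurable_pi_apply v (measurableSet_singleton (f v))

def Cyl (V : Type*) : Set (Set (V → Bool)) := {A | ∃ s f, A = cylSet s f}

lemma isPiSystem_Cyl : IsPiSystem (Cyl V) := by
  classical
  rintro _ ⟨s, f, rfl⟩ _ ⟨t, g, rfl⟩ hne
  obtain ⟨ω₀, h₁, h₂⟩ := hne
  refine ⟨s ∪ t, ω₀, ?_⟩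
  ext ω
  constructor
  · rintro ⟨hs, ht⟩ v hv
    rcases Finset.mem_union.1 hv with h | h
    · rw [hs v h, ← h₁ v h]
    · rw [ht v h, ← h₂ v h]
  · intro h
    exact ⟨fun v hv => (h v (Finset.mem_union_left _ hv)).trans (h₁ v hv),
      fun v hv => (h v (Finset.mem_union_right _ hv)).trans (h₂ v hv)⟩

lemma generateFrom_Cyl :
    MeasurableSpace.generateFrom (Cyl V) = (inferInstance : MeasurableSpace (V → Bool)) := by
  apply le_antisymm
  · exact MeasurableSpace.generateFrom_le (by rintro _ ⟨s, f, rfl⟩; exact measurableSet_cylSet s f)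
  · have hev : ∀ v : V, Measurable[MeasurableSpace.generateFrom (Cyl V)]
        (fun ω : V → Bool => ω v) := by
      intro v
      refine @measurable_to_countable' Bool (V → Bool) _ _
        (MeasurableSpace.generateFrom (Cyl V)) (fun ω => ω v) fun b => ?_
      apply MeasurableSpace.measurableSet_generateFrom
      exact ⟨{v}, fun _ => b, by ext ω; simp [cylSet]⟩
    show (⨆ v : V, MeasurableSpace.comap (fun ω : V → Bool => ω v) inferInstance) ≤ _
    exact iSup_le fun v => measurable_iff_comap_le.mp (hev v)

variable [DecidableEq V]

lemma slice (p : ℝ) (P : Measure (V → Bool)) [IsProbabilityMeasure P]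
    (hP : ∀ (s : Finset V) (f : V → Bool),
      P (cylSet s f) = ∏ v ∈ s, (if f v then ENNReal.ofReal p else ENNReal.ofReal (1 - p)))
    (v : V) (b : Bool) {A : Set (V → Bool)} (hA : MeasurableSet A) :
    P (A ∩ {ω | ω v = b}) =
      (if b then ENNReal.ofReal p else ENNReal.ofReal (1 - p)) *
        P ((fun ω => Function.update ω v b) ⁻¹' A) := by
  set c : ENNReal := if b then ENNReal.ofReal p else ENNReal.ofReal (1 - p) with hc
  have hcne : c ≠ ⊤ := by
    rw [hc]; split <;> exact ENNReal.ofReal_ne_top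
  have hT : Measurable (fun ω : V → Bool => Function.update ω v b) := by
    apply measurable_pi_lambda
    intro u
    rcases eq_or_ne u v with rfl | h
    · simpa only [Function.update_self] using measurable_const
    · simp only [Function.update_of_ne h]
      exact measurable_pi_apply u
  haveI : IsProbabilityMeasure (P.map (fun ω : V → Bool => Function.update ω v b)) :=
    Measure.isProbabilityMeasure_map hT.aemeasurable
  have key : P.restrict {ω | ω v = b} =
      c • P.map (fun ω : V → Bool => Function.update ω v b) := by
    haveI : IsFiniteMeasure (c • P.map (fun ω : V → Bool => Function.update ω v b)) := by
      constructor
      rw [Measure.smul_apply, measure_univ, smul_eq_mul, mul_one]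
      exact hcne.lt_top
    refine ext_of_generate_finite (Cyl V) generateFrom_Cyl.symm isPiSystem_Cyl ?_ ?_
    · rintro _ ⟨s, f, rfl⟩
      rw [Measure.restrict_apply (measurableSet_cylSet s f), Measure.smul_apply,
        Measure.map_apply hT (measurableSet_cylSet s f), smul_eq_mul]
      by_cases hvs : v ∈ s
      · by_cases hfb : f v = b
        · have h1 : cylSet s f ∩ {ω | ω v = b} = cylSet s f := by
            apply inter_eq_left.mpr
            intro ω hω
            show ω v = b
            rw [hω v hvs, hfb]
          have h2 : (fun ω : V → Bool => Function.update ω v b) ⁻¹' cylSet s f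
              = cylSet (s.erase v) f := by
            ext ω
            simp only [cylSet, mem_preimage, mem_setOf_eq, Finset.mem_erase]
            constructor
            · rintro h u ⟨huv, hus⟩
              have := h u hus
              rwa [Function.update_of_ne huv] at this
            · intro h u hus
              rcases eq_or_ne u v with rfl | hne
              · rw [Function.update_self, hfb]
              · rw [Function.update_of_ne hne]
                exact h u ⟨hne, hus⟩
          rw [h1, h2, hP, hP, ← Finset.mul_prod_erase s _ hvs, hfb]
        · have h1 : cylSet s f ∩ {ω | ω v = b} = ∅ := by
            apply eq_empty_iff_forall_notMem.mpr
            rintro ω ⟨hω, hωv⟩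
            exact hfb ((hω v hvs).symm.trans hωv)
          have h2 : (fun ω : V → Bool => Function.update ω v b) ⁻¹' cylSet s f = ∅ := by
            apply eq_empty_iff_forall_notMem.mpr
            intro ω hω
            have := hω v hvs
            simp only [Function.update_self] at this
            exact hfb this.symm
          rw [h1, h2]
          simp
      · have h2 : (fun ω : V → Bool => Function.update ω v b) ⁻¹' cylSet s f = cylSet s f := by
          ext ω
          simp only [cylSet, mem_preimage, mem_setOf_eq]
          constructor
          · intro h u hus
            have := h u hus
            rwa [Function.update_of_ne (fun he => hvs (by cases he; exact hus))] at this
          · intro h u hus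
            rw [Function.update_of_ne (fun he => hvs (by cases he; exact hus))]
            exact h u hus
        have h1 : cylSet s f ∩ {ω | ω v = b} = cylSet (insert v s) (Function.update f v b) := by
          ext ω
          simp only [cylSet, mem_inter_iff, mem_setOf_eq, Finset.mem_insert]
          constructor
          · rintro ⟨h, hb⟩ u hu
            rcases hu with rfl | hus
            · rw [Function.update_self]; exact hb
            · rw [Function.update_of_ne (fun he => hvs (by cases he; exact hus))]
              exact h u hus
          · intro h
            refine ⟨fun u hus => ?_, ?_⟩
            · have := h u (Or.inr hus)
              rwa [Function.update_of_ne (fun he => hvs (by cases he; exact hus))] at this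
            · have := h v (Or.inl rfl)
              rwa [Function.update_self] at this
        rw [h1, h2, hP, hP, Finset.prod_insert hvs]
        congr 1
        · rw [Function.update_self]
        · refine Finset.prod_congr rfl fun u hus => ?_
          rw [Function.update_of_ne (fun he => hvs (by cases he; exact hus))]
    · rw [Measure.restrict_apply_univ, Measure.smul_apply, measure_univ, smul_eq_mul, mul_one]
      have h1 : {ω : V → Bool | ω v = b} = cylSet {v} (fun _ => b) := by
        ext ω; simp [cylSet]
      rw [h1, hP]
      simp [hc]
  calc P (A ∩ {ω | ω v = b}) = P.restrict {ω | ω v = b} A := (Measure.restrict_apply hA).symm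
    _ = (c • P.map (fun ω : V → Bool => Function.update ω v b)) A := by rw [key]
    _ = c * P ((fun ω => Function.update ω v b) ⁻¹' A) := by
        rw [Measure.smul_apply, Measure.map_apply hT hA, smul_eq_mul]



def res (s : Finset V) (ω : V → Bool) : s → Bool := fun u => ω u

def atom (s : Finset V) (x : s → Bool) : Set (V → Bool) := res s ⁻¹' {x}

lemma mem_atom {s : Finset V} {x : s → Bool} {ω : V → Bool} :
    ω ∈ atom s x ↔ res s ω = x := Iff.rfl

lemma measurable_res (s : Finset V) : Measurable (res s) :=
  measurable_pi_lambda _ fun u => measurable_pi_apply (u : V)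

lemma measurableSet_atom (s : Finset V) (x : s → Bool) : MeasurableSet (atom s x) :=
  measurable_res s (measurableSet_singleton x)

lemma atom_eq_cylSet [DecidableEq V] (s : Finset V) (x : s → Bool) :
    atom s x = cylSet s (fun v => if h : v ∈ s then x ⟨v, h⟩ else false) := by
  ext ω
  simp only [mem_atom, cylSet, mem_setOf_eq, funext_iff, Subtype.forall]
  constructor
  · intro h v hv
    rw [dif_pos hv]
    exact h v hv
  · intro h v hv
    have := h v hv
    rwa [dif_pos hv] at this

lemma disjoint_atom {s : Finset V} {x y : s → Bool} (hxy : x ≠ y) :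
    Disjoint (atom s x) (atom s y) := by
  rw [Set.disjoint_left]
  intro ω hx hy
  exact hxy ((mem_atom.1 hx).symm.trans (mem_atom.1 hy))

variable (P : Measure (V → Bool))

lemma sum_measure_atom [IsProbabilityMeasure P] (s : Finset V) {G : Set (V → Bool)}
    (hG : MeasurableSet G) :
    ∑ x : (s → Bool), P (G ∩ atom s x) = P G := by
  classical
  have h1 : (⋃ x : (s → Bool), G ∩ atom s x) = G := by
    ext ω
    simp only [mem_iUnion, mem_inter_iff]
    constructor
    · rintro ⟨x, h, _⟩; exact h
    · intro h; exact ⟨res s ω, h, rfl⟩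
  have h2 := measure_iUnion (μ := P)
    (fun x y hxy => Disjoint.mono inter_subset_right inter_subset_right (disjoint_atom hxy))
    (fun x => hG.inter (measurableSet_atom s x))
  rw [← tsum_fintype (L := SummationFilter.unconditional _)]
  rw [← h2, h1]

lemma measure_atom [DecidableEq V] (p : ℝ) (hp0 : 0 ≤ p) (hp1 : p ≤ 1)
    (hP : ∀ (s : Finset V) (f : V → Bool),
      P (cylSet s f) = ∏ v ∈ s, (if f v then ENNReal.ofReal p else ENNReal.ofReal (1 - p)))
    (s : Finset V) (x : s → Bool) :
    P (atom s x) = ENNReal.ofReal (∏ u : s, (if x u then p else 1 - p)) := by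
  rw [atom_eq_cylSet, hP]
  rw [ENNReal.ofReal_prod_of_nonneg (fun u _ => by split <;> [linarith; linarith])]
  rw [Finset.prod_coe_sort_eq_attach]
  rw [← Finset.prod_attach s
    (fun v => if (if h : v ∈ s then x ⟨v, h⟩ else false) then ENNReal.ofReal p
      else ENNReal.ofReal (1 - p))]
  refine Finset.prod_congr rfl fun u _ => ?_
  rw [dif_pos u.2]
  split <;> simp

lemma integral_comp_res [IsProbabilityMeasure P] (s : Finset V) (h : (s → Bool) → ℝ) :
    ∫ ω, h (res s ω) ∂P = ∑ x : (s → Bool), (P (atom s x)).toReal * h x := by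
  rw [← integral_map (measurable_res s).aemeasurable (measurable_of_countable h).aestronglyMeasurable]
  haveI : IsProbabilityMeasure (P.map (res s)) :=
    Measure.isProbabilityMeasure_map (measurable_res s).aemeasurable
  rw [integral_fintype .of_finite]
  refine Finset.sum_congr rfl fun x _ => ?_
  rw [Measure.real, Measure.map_apply (measurable_res s) (measurableSet_singleton x), smul_eq_mul]
  rfl

lemma monotone_of_flip {ι : Type*} [Fintype ι] [DecidableEq ι] {f : (ι → Bool) → ℝ}
    (hf : ∀ x t, x t = false → f x ≤ f (Function.update x t true)) : Monotone f := by
  have key : ∀ (k : ℕ) (x y : ι → Bool), x ≤ y →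
      (Finset.univ.filter fun t => x t ≠ y t).card ≤ k → f x ≤ f y := by
    intro k
    induction k with
    | zero =>
      intro x y hxy hcard
      have hxy' : x = y := by
        funext t
        by_contra ht
        have hne : (Finset.univ.filter fun t => x t ≠ y t).Nonempty :=
          ⟨t, by simp [ht]⟩
        have := Finset.card_pos.2 hne
        omega
      rw [hxy']
    | succ k ih =>
      intro x y hxy hcard
      by_cases hxy' : x = y
      · rw [hxy']
      · obtain ⟨t, ht⟩ := Function.ne_iff.1 hxy'
        have hxt : x t = false ∧ y t = true := by
          have h := hxy t
          cases hx : x t <;> cases hy : y t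
          · exact absurd (hx.trans hy.symm) ht
          · exact ⟨rfl, rfl⟩
          · rw [hx, hy] at h; simp [Bool.le_iff_imp] at h
          · exact absurd (hx.trans hy.symm) ht
        have h1 : f x ≤ f (Function.update x t true) := hf x t hxt.1
        have hzy : Function.update x t true ≤ y := by
          intro u
          rcases eq_or_ne u t with rfl | hne
          · rw [Function.update_self, hxt.2]
          · rw [Function.update_of_ne hne]
            exact hxy u
        have hsubset : (Finset.univ.filter fun u => Function.update x t true u ≠ y u) ⊆
            (Finset.univ.filter fun u => x u ≠ y u).erase t := by
          intro u hu
          simp only [Finset.mem_filter, Finset.mem_erase, Finset.mem_univ, true_and] at *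
          rcases eq_or_ne u t with rfl | hne
          · rw [Function.update_self, hxt.2] at hu
            exact absurd rfl hu
          · rw [Function.update_of_ne hne] at hu
            exact ⟨hne, hu⟩
        have hmem : t ∈ Finset.univ.filter fun u => x u ≠ y u := by simp [ht]
        have hcard' : (Finset.univ.filter fun u => Function.update x t true u ≠ y u).card ≤ k := by
          have h2 := Finset.card_le_card hsubset
          rw [Finset.card_erase_of_mem hmem] at h2
          omega
        exact le_trans h1 (ih _ y hzy hcard')
  intro x y hxy
  exact key _ x y hxy le_rfl

lemma trivial_case {Ω : Type*} [MeasurableSpace Ω] (P : Measure Ω) [IsProbabilityMeasure P]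
    {E F : Set Ω} (hE : MeasurableSet E) (hF : MeasurableSet F) (ω₀ : Ω)
    (h0 : P {ω | ω ≠ ω₀} = 0) : P E * P F ≤ P (E ∩ F) := by
  by_cases h1 : ω₀ ∈ E
  · by_cases h2 : ω₀ ∈ F
    · have hcompl : P ((E ∩ F)ᶜ) = 0 := by
        refine measure_mono_null (fun ω hω => ?_) h0
        intro he
        rw [he] at hω
        exact hω ⟨h1, h2⟩
      rw [(prob_compl_eq_zero_iff (hE.inter hF)).1 hcompl]
      exact mul_le_one' prob_le_one prob_le_one
    · have : P F = 0 := by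
        refine measure_mono_null (fun ω hω => ?_) h0
        intro he
        rw [he] at hω
        exact h2 hω
      simp [this]
  · have : P E = 0 := by
      refine measure_mono_null (fun ω hω => ?_) h0
      intro he
      rw [he] at hω
      exact h1 hω
    simp [this]

lemma flip_le [DecidableEq V] (p : ℝ) (P : Measure (V → Bool)) [IsProbabilityMeasure P]
    (hP : ∀ (s : Finset V) (f : V → Bool),
      P (cylSet s f) = ∏ v ∈ s, (if f v then ENNReal.ofReal p else ENNReal.ofReal (1 - p)))
    {E : Set (V → Bool)} (hE : MeasurableSet E)
    (hEinc : ∀ ω ω' : V → Bool, (∀ v, ω v ≤ ω' v) → ω ∈ E → ω' ∈ E)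
    (s : Finset V) (x : s → Bool) (u : s) (hxu : x u = false) :
    ENNReal.ofReal p * P (E ∩ atom s x) ≤
      ENNReal.ofReal (1 - p) * P (E ∩ atom s (Function.update x u true)) := by
  classical
  set y := Function.update x u true with hy
  have hAx : MeasurableSet (E ∩ atom s x) := hE.inter (measurableSet_atom s x)
  have hAy : MeasurableSet (E ∩ atom s y) := hE.inter (measurableSet_atom s y)
  have hsubx : E ∩ atom s x ⊆ {ω | ω (u : V) = false} := by
    rintro ω ⟨-, hω⟩
    have := congrFun (mem_atom.1 hω) u
    simpa [res, hxu] using this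
  have hsuby : E ∩ atom s y ⊆ {ω | ω (u : V) = true} := by
    rintro ω ⟨-, hω⟩
    have := congrFun (mem_atom.1 hω) u
    simp only [res] at this
    show ω (u : V) = true
    rw [this, hy, Function.update_self]
  have h1 := slice p P hP (u : V) false hAx
  rw [inter_eq_left.mpr hsubx] at h1
  simp only [Bool.false_eq_true, if_false] at h1
  have h2 := slice p P hP (u : V) true hAy
  rw [inter_eq_left.mpr hsuby] at h2
  simp only [if_true] at h2
  have hsub2 : (fun ω : V → Bool => Function.update ω (u : V) false) ⁻¹' (E ∩ atom s x) ⊆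
      (fun ω : V → Bool => Function.update ω (u : V) true) ⁻¹' (E ∩ atom s y) := by
    rintro ω ⟨hωE, hωa⟩
    constructor
    · refine hEinc _ _ (fun v => ?_) hωE
      rcases eq_or_ne v (u : V) with rfl | hne
      · simp [Function.update_self]
      · simp [Function.update_of_ne hne]
    · show res s (Function.update ω (u : V) true) = y
      funext t
      rcases eq_or_ne t u with rfl | hne
      · show Function.update ω (t : V) true (t : V) = y t
        rw [Function.update_self, hy, Function.update_self]
      · have htu : (t : V) ≠ (u : V) := fun hh => hne (Subtype.ext hh)
        show Function.update ω (u : V) true (t : V) = y t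
        rw [Function.update_of_ne htu, hy, Function.update_of_ne hne]
        have h3 := congrFun (mem_atom.1 hωa) t
        simp only [res] at h3
        rw [Function.update_of_ne htu] at h3
        exact h3
  calc ENNReal.ofReal p * P (E ∩ atom s x)
      = ENNReal.ofReal p * (ENNReal.ofReal (1 - p) *
        P ((fun ω : V → Bool => Function.update ω (u : V) false) ⁻¹' (E ∩ atom s x))) := by
        rw [← h1]
    _ ≤ ENNReal.ofReal p * (ENNReal.ofReal (1 - p) *
        P ((fun ω : V → Bool => Function.update ω (u : V) true) ⁻¹' (E ∩ atom s y))) := by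
        exact mul_le_mul_right (mul_le_mul_right (measure_mono hsub2) _) _
    _ = ENNReal.ofReal (1 - p) * P (E ∩ atom s y) := by
        rw [h2]; ring

noncomputable def wgt (p : ℝ) (s : Finset V) (x : s → Bool) : ℝ :=
  ∏ u, (if x u then p else 1 - p)

noncomputable def rat (P : Measure (V → Bool)) (p : ℝ) (G : Set (V → Bool)) (s : Finset V)
    (x : s → Bool) : ℝ :=
  (P (G ∩ atom s x)).toReal / wgt p s x

section Level

variable [DecidableEq V] {p : ℝ} (P : Measure (V → Bool)) [IsProbabilityMeasure P]

lemma wgt_pos (hp0 : 0 < p) (hp1 : p < 1) (s : Finset V) (x : s → Bool) : 0 < wgt p s x :=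
  Finset.prod_pos fun u _ => by split <;> linarith

variable (hp0 : 0 < p) (hp1 : p < 1)
variable (hP : ∀ (s : Finset V) (f : V → Bool),
      P (cylSet s f) = ∏ v ∈ s, (if f v then ENNReal.ofReal p else ENNReal.ofReal (1 - p)))

include hp0 hp1 hP

lemma measure_atom' (s : Finset V) (x : s → Bool) :
    P (atom s x) = ENNReal.ofReal (wgt p s x) :=
  measure_atom P p hp0.le hp1.le hP s x

lemma toReal_le_wgt (G : Set (V → Bool)) (s : Finset V) (x : s → Bool) :
    (P (G ∩ atom s x)).toReal ≤ wgt p s x := by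
  have h1 : P (G ∩ atom s x) ≤ P (atom s x) := measure_mono inter_subset_right
  rw [measure_atom' P hp0 hp1 hP] at h1
  have h2 := ENNReal.toReal_mono ENNReal.ofReal_ne_top h1
  rwa [ENNReal.toReal_ofReal (wgt_pos hp0 hp1 s x).le] at h2

lemma rat_nonneg (G : Set (V → Bool)) (s : Finset V) (x : s → Bool) : 0 ≤ rat P p G s x :=
  div_nonneg ENNReal.toReal_nonneg (wgt_pos hp0 hp1 s x).le

lemma rat_le_one (G : Set (V → Bool)) (s : Finset V) (x : s → Bool) : rat P p G s x ≤ 1 :=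
  (div_le_one (wgt_pos hp0 hp1 s x)).mpr (toReal_le_wgt P hp0 hp1 hP G s x)

lemma wgt_mul_rat (G : Set (V → Bool)) (s : Finset V) (x : s → Bool) :
    wgt p s x * rat P p G s x = (P (G ∩ atom s x)).toReal := by
  rw [rat, mul_comm, div_mul_cancel₀ _ (ne_of_gt (wgt_pos hp0 hp1 s x))]

lemma rat_mono {G : Set (V → Bool)} (hG : MeasurableSet G)
    (hGinc : ∀ ω ω' : V → Bool, (∀ v, ω v ≤ ω' v) → ω ∈ G → ω' ∈ G) (s : Finset V) :
    Monotone (rat P p G s) := by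
  classical
  apply monotone_of_flip
  intro x t hxt
  have hflip := flip_le p P hP hG hGinc s x t hxt
  set a := (P (G ∩ atom s x)).toReal with ha
  set c := (P (G ∩ atom s (Function.update x t true))).toReal with hc
  have hac : p * a ≤ (1 - p) * c := by
    have h2 := ENNReal.toReal_mono
      (ENNReal.mul_ne_top ENNReal.ofReal_ne_top (measure_ne_top _ _)) hflip
    rwa [ENNReal.toReal_mul, ENNReal.toReal_mul, ENNReal.toReal_ofReal hp0.le,
      ENNReal.toReal_ofReal (by linarith)] at h2
  have h1 : wgt p s x = (1 - p) * ∏ u ∈ Finset.univ.erase t, (if x u then p else 1 - p) := by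
    rw [wgt, ← Finset.mul_prod_erase Finset.univ _ (Finset.mem_univ t), hxt]
    simp
  have h2 : wgt p s (Function.update x t true) =
      p * ∏ u ∈ Finset.univ.erase t, (if x u then p else 1 - p) := by
    rw [wgt]
    calc (∏ u, if Function.update x t true u then p else 1 - p)
        = ∏ u, Function.update (fun u => if x u then p else 1 - p) t p u := by
          refine Finset.prod_congr rfl fun u _ => ?_
          rcases eq_or_ne u t with rfl | hne
          · rw [Function.update_self, Function.update_self]; simp
          · rw [Function.update_of_ne hne, Function.update_of_ne hne]
      _ = p * ∏ u ∈ Finset.univ \ {t}, (if x u then p else 1 - p) :=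
          Finset.prod_update_of_mem (Finset.mem_univ t) _ _
      _ = p * ∏ u ∈ Finset.univ.erase t, (if x u then p else 1 - p) := by
          rw [Finset.erase_eq]
  have hw : p * wgt p s x = (1 - p) * wgt p s (Function.update x t true) := by
    rw [h1, h2]; ring
  show a / wgt p s x ≤ c / wgt p s (Function.update x t true)
  rw [div_le_div_iff₀ (wgt_pos hp0 hp1 s x) (wgt_pos hp0 hp1 s _)]
  have h4 := mul_le_mul_of_nonneg_right hac (wgt_pos hp0 hp1 s x).le
  have h3 : (1 - p) * (a * wgt p s (Function.update x t true)) ≤ (1 - p) * (c * wgt p s x) := by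
    calc (1 - p) * (a * wgt p s (Function.update x t true))
        = a * ((1 - p) * wgt p s (Function.update x t true)) := by ring
      _ = a * (p * wgt p s x) := by rw [← hw]
      _ = (p * a) * wgt p s x := by ring
      _ ≤ ((1 - p) * c) * wgt p s x := h4
      _ = (1 - p) * (c * wgt p s x) := by ring
  exact le_of_mul_le_mul_left h3 (by linarith)

lemma sum_toReal_measure_atom {G : Set (V → Bool)} (hG : MeasurableSet G) (s : Finset V) :
    ∑ x : (s → Bool), (P (G ∩ atom s x)).toReal = (P G).toReal := by
  rw [← ENNReal.toReal_sum (fun _ _ => measure_ne_top _ _), sum_measure_atom P s hG]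

lemma fkg_level {E F : Set (V → Bool)} (hE : MeasurableSet E) (hF : MeasurableSet F)
    (hEinc : ∀ ω ω' : V → Bool, (∀ v, ω v ≤ ω' v) → ω ∈ E → ω' ∈ E)
    (hFinc : ∀ ω ω' : V → Bool, (∀ v, ω v ≤ ω' v) → ω ∈ F → ω' ∈ F) (s : Finset V) :
    (P E).toReal * (P F).toReal ≤
      ∑ x : (s → Bool), wgt p s x * (rat P p E s x * rat P p F s x) := by
  classical
  have h1 := fkg (μ := wgt p s) (f := rat P p E s) (g := rat P p F s)
    (fun x => (wgt_pos hp0 hp1 s x).le)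
    (fun x => rat_nonneg P hp0 hp1 hP E s x)
    (fun x => rat_nonneg P hp0 hp1 hP F s x)
    (rat_mono P hp0 hp1 hP hE hEinc s)
    (rat_mono P hp0 hp1 hP hF hFinc s)
    (fun a b => le_of_eq ?_)
  · have hsumw : ∑ x : (s → Bool), wgt p s x = 1 := by
      have h3 : ∑ x : (s → Bool), (P (atom s x)).toReal = (P univ).toReal := by
        simpa using sum_toReal_measure_atom P hp0 hp1 hP MeasurableSet.univ s
      rw [measure_univ, ENNReal.toReal_one] at h3
      rw [← h3]
      exact Finset.sum_congr rfl fun x _ => by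
        rw [measure_atom' P hp0 hp1 hP, ENNReal.toReal_ofReal (wgt_pos hp0 hp1 s x).le]
    have hsumE : ∑ x : (s → Bool), wgt p s x * rat P p E s x = (P E).toReal := by
      rw [← sum_toReal_measure_atom P hp0 hp1 hP hE s]
      exact Finset.sum_congr rfl fun x _ => wgt_mul_rat P hp0 hp1 hP E s x
    have hsumF : ∑ x : (s → Bool), wgt p s x * rat P p F s x = (P F).toReal := by
      rw [← sum_toReal_measure_atom P hp0 hp1 hP hF s]
      exact Finset.sum_congr rfl fun x _ => wgt_mul_rat P hp0 hp1 hP F s x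
    rw [hsumE, hsumF, hsumw, one_mul] at h1
    exact h1
  · rw [wgt, wgt, wgt, wgt, ← Finset.prod_mul_distrib, ← Finset.prod_mul_distrib]
    refine Finset.prod_congr rfl fun u _ => ?_
    cases hau : a u <;> cases hbu : b u <;>
      simp [Pi.inf_apply, Pi.sup_apply, hau, hbu] <;> ring

lemma integral_rat_mul {E F : Set (V → Bool)} (s : Finset V) :
    ∫ ω, rat P p E s (res s ω) * rat P p F s (res s ω) ∂P =
      ∑ x : (s → Bool), wgt p s x * (rat P p E s x * rat P p F s x) := by
  have h := integral_comp_res P s (fun x => rat P p E s x * rat P p F s x)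
  exact h.trans (Finset.sum_congr rfl fun x _ => by
    rw [measure_atom' P hp0 hp1 hP, ENNReal.toReal_ofReal (wgt_pos hp0 hp1 s x).le])

lemma integrable_rat_comp (G : Set (V → Bool)) (s : Finset V) :
    Integrable (fun ω => rat P p G s (res s ω)) P := by
  refine Integrable.mono' (integrable_const (1 : ℝ))
    ((measurable_of_countable (rat P p G s)).comp (measurable_res s)).aestronglyMeasurable
    (Filter.Eventually.of_forall fun ω => ?_)
  rw [Real.norm_eq_abs, abs_of_nonneg (rat_nonneg P hp0 hp1 hP G s _)]
  exact rat_le_one P hp0 hp1 hP G s _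

lemma condexp_rat {G : Set (V → Bool)} (hG : MeasurableSet G) (s : Finset V) :
    (fun ω => rat P p G s (res s ω)) =ᵐ[P]
      P[Set.indicator G (fun _ => (1 : ℝ)) | MeasurableSpace.comap (res s) inferInstance] := by
  classical
  have hm : MeasurableSpace.comap (res s) inferInstance ≤
      (inferInstance : MeasurableSpace (V → Bool)) :=
    measurable_iff_comap_le.mp (measurable_res s)
  have hGint : Integrable (Set.indicator G (fun _ => (1 : ℝ))) P :=
    (integrable_const (1 : ℝ)).indicator hG
  refine ae_eq_condExp_of_forall_setIntegral_eq hm hGint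
    (fun A _ _ => (integrable_rat_comp P hp0 hp1 hP G s).integrableOn) (fun A hA _ => ?_) ?_
  · obtain ⟨S, -, rfl⟩ := MeasurableSpace.measurableSet_comap.mp hA
    set T := (Set.toFinite S).toFinset with hT
    have hAdec : res s ⁻¹' S = ⋃ x ∈ T, atom s x := by
      ext ω
      simp only [mem_preimage, mem_iUnion]
      constructor
      · intro hωS
        exact ⟨res s ω, by rwa [hT, Set.Finite.mem_toFinset], rfl⟩
      · rintro ⟨x, hxT, hx⟩
        rw [mem_atom] at hx
        rw [hx]
        rwa [hT, Set.Finite.mem_toFinset] at hxT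
    have hdisj : (T : Set (s → Bool)).Pairwise (Disjoint on fun x => atom s x) :=
      fun x _ y _ hxy => disjoint_atom hxy
    rw [hAdec,
      integral_biUnion_finset T (fun x _ => measurableSet_atom s x) hdisj
        (fun x _ => (integrable_rat_comp P hp0 hp1 hP G s).integrableOn),
      integral_biUnion_finset T (fun x _ => measurableSet_atom s x) hdisj
        (fun x _ => hGint.integrableOn)]
    refine Finset.sum_congr rfl fun x hxT => ?_
    have hconst : EqOn (fun ω => rat P p G s (res s ω)) (fun _ => rat P p G s x) (atom s x) :=
      fun ω hω => by simp only; rw [mem_atom.1 hω]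
    rw [setIntegral_congr_fun (measurableSet_atom s x) hconst, setIntegral_const,
      setIntegral_indicator hG, setIntegral_const, smul_eq_mul, smul_eq_mul, mul_one,
      Measure.real, Measure.real, measure_atom' P hp0 hp1 hP, ENNReal.toReal_ofReal (wgt_pos hp0 hp1 s x).le,
      wgt_mul_rat P hp0 hp1 hP G s x, inter_comm]
  · have hmeas : @Measurable _ _ (MeasurableSpace.comap (res s) inferInstance) _
        (fun ω => rat P p G s (res s ω)) :=
      (measurable_of_countable (rat P p G s)).comp (measurable_iff_comap_le.mpr le_rfl)
    exact StronglyMeasurable.aestronglyMeasurable (Measurable.stronglyMeasurable hmeas)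

end Level

end BPFaux

/-- Harris/FKG inequality: for a Bernoulli(p) product measure on
`{-1,+1}^V ≃ (V → Bool)` (true = +1) over a countable set `V`, and increasing
events `E`, `F`, one has `P(E ∩ F) ≥ P(E) · P(F)`. -/
theorem bernoulli_product_FKG {V : Type*} [Countable V]
    (p : ℝ) (hp0 : 0 ≤ p) (hp1 : p ≤ 1)
    (P : Measure (V → Bool)) [IsProbabilityMeasure P]
    (hP : ∀ (s : Finset V) (f : V → Bool),
      P {ω | ∀ v ∈ s, ω v = f v} =
        ∏ v ∈ s, (if f v then ENNReal.ofReal p else ENNReal.ofReal (1 - p)))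
    (E F : Set (V → Bool)) (hE : MeasurableSet E) (hF : MeasurableSet F)
    (hEinc : ∀ ω ω' : V → Bool, (∀ v, ω v ≤ ω' v) → ω ∈ E → ω' ∈ E)
    (hFinc : ∀ ω ω' : V → Bool, (∀ v, ω v ≤ ω' v) → ω ∈ F → ω' ∈ F) :
    P E * P F ≤ P (E ∩ F) := by
  classical
  have hP' : ∀ (s : Finset V) (f : V → Bool),
      P (BPFaux.cylSet s f) =
        ∏ v ∈ s, (if f v then ENNReal.ofReal p else ENNReal.ofReal (1 - p)) := hP
  have hsingle : ∀ (v : V) (b : Bool),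
      P {ω | ω v = b} = (if b then ENNReal.ofReal p else ENNReal.ofReal (1 - p)) := by
    intro v b
    have h1 : {ω : V → Bool | ω v = b} = BPFaux.cylSet {v} (fun _ => b) := by
      ext ω; simp [BPFaux.cylSet]
    rw [h1, hP']
    simp
  rcases eq_or_lt_of_le hp0 with hp0' | hp0'
  · refine BPFaux.trivial_case P hE hF (fun _ => false) ?_
    refine measure_mono_null (fun ω hω => ?_)
      (measure_iUnion_null (s := fun v : V => {ω : V → Bool | ω v = true}) fun v => ?_)
    · by_contra hc
      simp only [Set.mem_iUnion, Set.mem_setOf_eq, not_exists] at hc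
      exact hω (funext fun v => by have h := hc v; revert h; cases ω v <;> simp)
    · rw [hsingle]; simp [← hp0']
  rcases eq_or_lt_of_le hp1 with hp1' | hp1'
  · refine BPFaux.trivial_case P hE hF (fun _ => true) ?_
    refine measure_mono_null (fun ω hω => ?_)
      (measure_iUnion_null (s := fun v : V => {ω : V → Bool | ω v = false}) fun v => ?_)
    · by_contra hc
      simp only [Set.mem_iUnion, Set.mem_setOf_eq, not_exists] at hc
      exact hω (funext fun v => by have h := hc v; revert h; cases ω v <;> simp)
    · rw [hsingle]; simp [hp1']
  -- main case : 0 < p < 1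
  obtain ⟨e, he⟩ := exists_injective_nat V
  set s : ℕ → Finset V := fun n => ((Set.finite_Iio n).preimage
    (Function.Injective.injOn he)).toFinset with hs
  have hs_mem : ∀ (n : ℕ) (v : V), v ∈ s n ↔ e v < n := by
    intro n v
    simp only [hs, Set.Finite.mem_toFinset, Set.mem_preimage, Set.mem_Iio]
  have hs_mono : Monotone s := fun m n hmn v hv => by
    rw [hs_mem] at hv ⊢; omega
  have hres_meas : ∀ n, Measurable (BPFaux.res (s n)) := fun n => BPFaux.measurable_res _
  have hFmono : Monotone (fun n => MeasurableSpace.comap (BPFaux.res (s n)) inferInstance :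
      ℕ → MeasurableSpace (V → Bool)) := by
    intro m n hmn
    have hproj : Measurable (fun (y : {v // v ∈ s n} → Bool) (u : {v // v ∈ s m}) =>
        y ⟨u.1, hs_mono hmn u.2⟩) :=
      measurable_pi_lambda _ fun u => measurable_pi_apply _
    have hcomp : BPFaux.res (s m) = (fun (y : {v // v ∈ s n} → Bool) (u : {v // v ∈ s m}) =>
        y ⟨u.1, hs_mono hmn u.2⟩) ∘ BPFaux.res (s n) := rfl
    calc MeasurableSpace.comap (BPFaux.res (s m)) inferInstance
        = MeasurableSpace.comap (BPFaux.res (s n))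
            (MeasurableSpace.comap (fun (y : {v // v ∈ s n} → Bool) (u : {v // v ∈ s m}) =>
              y ⟨u.1, hs_mono hmn u.2⟩) inferInstance) := by
          rw [hcomp, MeasurableSpace.comap_comp]
      _ ≤ MeasurableSpace.comap (BPFaux.res (s n)) inferInstance :=
          MeasurableSpace.comap_mono (measurable_iff_comap_le.mp hproj)
  set ℱ : Filtration ℕ (inferInstance : MeasurableSpace (V → Bool)) :=
    ⟨fun n => MeasurableSpace.comap (BPFaux.res (s n)) inferInstance, hFmono,
      fun n => measurable_iff_comap_le.mp (hres_meas n)⟩ with hℱ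
  have hℱn : ∀ n, (ℱ n : MeasurableSpace (V → Bool)) =
      MeasurableSpace.comap (BPFaux.res (s n)) inferInstance := fun n => rfl
  have hsup : (inferInstance : MeasurableSpace (V → Bool)) ≤
      ⨆ n, (ℱ n : MeasurableSpace (V → Bool)) := by
    have hev : ∀ v : V, @Measurable _ _ (⨆ n, (ℱ n : MeasurableSpace (V → Bool))) _
        (fun ω : V → Bool => ω v) := by
      intro v
      have hvmem : v ∈ s (e v + 1) := (hs_mem _ _).mpr (Nat.lt_succ_self _)
      have h1 : @Measurable _ _ (ℱ (e v + 1) : MeasurableSpace (V → Bool)) _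
          (fun ω : V → Bool => ω v) := by
        have h2 : (fun ω : V → Bool => ω v) =
            (fun y : {w // w ∈ s (e v + 1)} → Bool => y ⟨v, hvmem⟩) ∘
              BPFaux.res (s (e v + 1)) := rfl
        rw [h2]
        exact Measurable.comp (measurable_pi_apply _)
          (measurable_iff_comap_le.mpr (hℱn (e v + 1)).ge)
      exact h1.mono (le_iSup (fun n => (ℱ n : MeasurableSpace (V → Bool))) (e v + 1)) le_rfl
    show (⨆ v : V, MeasurableSpace.comap (fun ω : V → Bool => ω v) inferInstance) ≤ _
    exact iSup_le fun v => measurable_iff_comap_le.mp (hev v)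
  have hconv : ∀ (G : Set (V → Bool)), MeasurableSet G →
      ∀ᵐ ω ∂P, Filter.Tendsto (fun n => BPFaux.rat P p G (s n) (BPFaux.res (s n) ω))
        Filter.atTop (nhds (Set.indicator G (fun _ => (1 : ℝ)) ω)) := by
    intro G hG
    have hGint : Integrable (Set.indicator G (fun _ => (1 : ℝ))) P :=
      (integrable_const (1 : ℝ)).indicator hG
    have hGsm : StronglyMeasurable[⨆ n, (ℱ n : MeasurableSpace (V → Bool))]
        (Set.indicator G (fun _ => (1 : ℝ))) :=
      StronglyMeasurable.indicator stronglyMeasurable_const (hsup G hG)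
    have hlevy := hGint.tendsto_ae_condExp (ℱ := ℱ) hGsm
    have hae : ∀ᵐ ω ∂P, ∀ n, BPFaux.rat P p G (s n) (BPFaux.res (s n) ω) =
        (P[Set.indicator G (fun _ => (1 : ℝ)) | (ℱ n : MeasurableSpace (V → Bool))]) ω := by
      rw [MeasureTheory.ae_all_iff]
      intro n
      have h4 := BPFaux.condexp_rat P hp0' hp1' hP' hG (s n)
      rw [← hℱn n] at h4
      exact h4
    filter_upwards [hlevy, hae] with ω h1 h2
    have h3 : (fun n => BPFaux.rat P p G (s n) (BPFaux.res (s n) ω)) =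
        fun n => (P[Set.indicator G (fun _ => (1 : ℝ)) | (ℱ n : MeasurableSpace (V → Bool))]) ω :=
      funext h2
    rw [h3]
    exact h1
  have hfkgn : ∀ n, (P E).toReal * (P F).toReal ≤
      ∫ ω, BPFaux.rat P p E (s n) (BPFaux.res (s n) ω) *
        BPFaux.rat P p F (s n) (BPFaux.res (s n) ω) ∂P := by
    intro n
    rw [BPFaux.integral_rat_mul P hp0' hp1' hP' (s n)]
    exact BPFaux.fkg_level P hp0' hp1' hP' hE hF hEinc hFinc (s n)
  have hdct : Filter.Tendsto (fun n => ∫ ω, BPFaux.rat P p E (s n) (BPFaux.res (s n) ω) *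
      BPFaux.rat P p F (s n) (BPFaux.res (s n) ω) ∂P) Filter.atTop
      (nhds (∫ ω, Set.indicator E (fun _ => (1 : ℝ)) ω *
        Set.indicator F (fun _ => (1 : ℝ)) ω ∂P)) := by
    refine tendsto_integral_of_dominated_convergence (fun _ => (1 : ℝ)) ?_ (integrable_const 1)
      ?_ ?_
    · intro n
      exact (((measurable_of_countable (BPFaux.rat P p E (s n))).comp (hres_meas n)).mul
        ((measurable_of_countable (BPFaux.rat P p F (s n))).comp (hres_meas n))).aestronglyMeasurable
    · intro n
      refine Filter.Eventually.of_forall fun ω => ?_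
      rw [Real.norm_eq_abs, abs_mul]
      have h1 := BPFaux.rat_nonneg P hp0' hp1' hP' E (s n) (BPFaux.res (s n) ω)
      have h2 := BPFaux.rat_le_one P hp0' hp1' hP' E (s n) (BPFaux.res (s n) ω)
      have h3 := BPFaux.rat_nonneg P hp0' hp1' hP' F (s n) (BPFaux.res (s n) ω)
      have h4 := BPFaux.rat_le_one P hp0' hp1' hP' F (s n) (BPFaux.res (s n) ω)
      rw [abs_of_nonneg h1, abs_of_nonneg h3]
      show _ ≤ (1 : ℝ)
      first
        | exact mul_le_one₀ h2 h3 h4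
        | exact mul_le_one h2 h3 h4
    · filter_upwards [hconv E hE, hconv F hF] with ω h1 h2
      exact h1.mul h2
  have hmul_ind : (fun ω => Set.indicator E (fun _ => (1 : ℝ)) ω *
      Set.indicator F (fun _ => (1 : ℝ)) ω) = Set.indicator (E ∩ F) (fun _ => (1 : ℝ)) := by
    funext ω
    by_cases h1 : ω ∈ E <;> by_cases h2 : ω ∈ F <;>
      simp [Set.indicator_apply, h1, h2, Set.mem_inter_iff]
  have hlim : (P E).toReal * (P F).toReal ≤ (P (E ∩ F)).toReal := by
    have h5 := ge_of_tendsto' hdct hfkgn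
    calc (P E).toReal * (P F).toReal
        ≤ ∫ ω, Set.indicator E (fun _ => (1 : ℝ)) ω *
            Set.indicator F (fun _ => (1 : ℝ)) ω ∂P := h5
      _ = (P (E ∩ F)).toReal := by
          rw [hmul_ind, integral_indicator (hE.inter hF), setIntegral_const, smul_eq_mul,
            mul_one, Measure.real]
  rw [← ENNReal.ofReal_toReal (measure_ne_top P E), ← ENNReal.ofReal_toReal (measure_ne_top P F),
    ← ENNReal.ofReal_toReal (measure_ne_top P (E ∩ F)),
    ← ENNReal.ofReal_mul ENNReal.toReal_nonneg]
  exact ENNReal.ofReal_le_ofReal hlim
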